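/- (Worpitzky-type convergence for large partial quotients) Let (c_n) be a sequence of complex numbers with |c_n · c_{n+1}| ≥ 4 for all n ≥ 1. Then the continued fraction [c_1, c_2, c_3, …] converges, i.e., the sequence of convergents [c_1, …, c_n] converges in ℂ. -/

import Mathlib

open Filter Topology

/-- Numerators of the convergents: `p 0 = 1`, `p 1 = c 0`,
`p (n+2) = c (n+1) * p (n+1) + p n` (partial quotients `c 0, c 1, …`). -/
def cnum (c : ℕ → ℂ) : ℕ → ℂ
  | 0 => 1
  | 1 => c 0
  | (n+2) => c (n+1) * cnum c (n+1) + cnum c n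

/-- Denominators of the convergents: `q 0 = 0`, `q 1 = 1`,
`q (n+2) = c (n+1) * q (n+1) + q n`. -/
def cden (c : ℕ → ℂ) : ℕ → ℂ
  | 0 => 0
  | 1 => 1
  | (n+2) => c (n+1) * cden c (n+1) + cden c n

/-- Product of `c 1 * c 2 * ⋯ * c n`. -/
noncomputable def wP (c : ℕ → ℂ) (n : ℕ) : ℂ := ∏ k ∈ Finset.range n, c (k+1)

/-- Normalized denominators. -/
noncomputable def wB (c : ℕ → ℂ) (n : ℕ) : ℂ := cden c (n+1) / wP c n

lemma wc_ne (c : ℕ → ℂ) (h : ∀ n, 4 ≤ ‖c n * c (n+1)‖) (n : ℕ) :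
    c n ≠ 0 := by
  intro h0
  have := h n
  rw [h0, zero_mul, norm_zero] at this
  linarith

lemma wc_abs_pos (c : ℕ → ℂ) (h : ∀ n, 4 ≤ ‖c n * c (n+1)‖) (n : ℕ) :
    0 < ‖c n‖ :=
  norm_pos_iff.mpr (wc_ne c h n)

lemma wP_ne (c : ℕ → ℂ) (h : ∀ n, 4 ≤ ‖c n * c (n+1)‖) (n : ℕ) :
    wP c n ≠ 0 :=
  Finset.prod_ne_zero_iff.2 fun k _ => wc_ne c h (k+1)

lemma wP_succ (c : ℕ → ℂ) (n : ℕ) : wP c (n+1) = wP c n * c (n+1) :=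
  Finset.prod_range_succ _ _

lemma wB0 (c : ℕ → ℂ) : wB c 0 = 1 := by
  simp [wB, wP, cden]

lemma wB1 (c : ℕ → ℂ) (h : ∀ n, 4 ≤ ‖c n * c (n+1)‖) : wB c 1 = 1 := by
  have h1 : cden c 2 = c 1 := by simp [cden]
  have h2 : wP c 1 = c 1 := by simp [wP]
  rw [wB, h1, h2, div_self (wc_ne c h 1)]

lemma wB_rec (c : ℕ → ℂ) (h : ∀ n, 4 ≤ ‖c n * c (n+1)‖) (n : ℕ) :
    wB c (n+2) = wB c (n+1) + (c (n+1) * c (n+2))⁻¹ * wB c n := by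
  have hq : cden c (n+3) = c (n+2) * cden c (n+2) + cden c (n+1) := rfl
  rw [wB, wB, wB, hq, wP_succ, wP_succ]
  have h1 := wP_ne c h n
  have h2 := wc_ne c h (n+1)
  have h3 := wc_ne c h (n+2)
  field_simp

lemma wB_inv (c : ℕ → ℂ) (h : ∀ n, 4 ≤ ‖c n * c (n+1)‖) (n : ℕ) :
    (1/2 : ℝ)^(n+1) ≤ ‖wB c (n+1)‖ - ‖wB c n‖ / 2 := by
  induction n with
  | zero => rw [wB0, wB1 c h]; norm_num
  | succ n ih =>
      have h4 := h (n+1)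
      have ha : ‖(c (n+1) * c (n+2))⁻¹‖ ≤ 1/4 := by
        rw [norm_inv]
        rw [show (1:ℝ)/4 = 4⁻¹ by norm_num]
        exact inv_anti₀ (by norm_num) h4
      have hBn : 0 ≤ ‖wB c n‖ := norm_nonneg _
      have htri : ‖wB c (n+1)‖ - ‖wB c n‖ / 4
          ≤ ‖wB c (n+2)‖ := by
        have h1 : ‖wB c (n+1)‖ ≤ ‖wB c (n+2)‖
            + ‖(c (n+1) * c (n+2))⁻¹ * wB c n‖ := by
          have : wB c (n+1) = wB c (n+2) - (c (n+1) * c (n+2))⁻¹ * wB c n := by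
            rw [wB_rec c h n]; ring
          rw [this]
          exact (norm_sub_le _ _)
        have h2 : ‖(c (n+1) * c (n+2))⁻¹ * wB c n‖
            ≤ ‖wB c n‖ / 4 := by
          rw [norm_mul]
          nlinarith
        linarith
      have hp : (1/2 : ℝ)^(n+2) = (1/2) * (1/2)^(n+1) := by ring
      linarith

lemma wB_lower (c : ℕ → ℂ) (h : ∀ n, 4 ≤ ‖c n * c (n+1)‖) (n : ℕ) :
    ((n:ℝ)+1) * (1/2)^n ≤ ‖wB c n‖ := by
  induction n with
  | zero => simp [wB0]
  | succ n ih =>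
      have := wB_inv c h n
      have hp : (1/2 : ℝ)^(n+1) = (1/2) * (1/2)^n := by ring
      push_cast
      nlinarith [pow_pos (by norm_num : (0:ℝ) < 1/2) n]

lemma wq_eq (c : ℕ → ℂ) (h : ∀ n, 4 ≤ ‖c n * c (n+1)‖) (n : ℕ) :
    cden c (n+1) = wB c n * wP c n := by
  rw [wB, div_mul_cancel₀ _ (wP_ne c h n)]

lemma wPabs (c : ℕ → ℂ) (n : ℕ) :
    ‖wP c n‖ = ∏ k ∈ Finset.range n, ‖c (k+1)‖ := by
  simp [wP]

lemma wPabs_pos (c : ℕ → ℂ) (h : ∀ n, 4 ≤ ‖c n * c (n+1)‖) (n : ℕ) :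
    0 < ‖wP c n‖ :=
  norm_pos_iff.mpr (wP_ne c h n)

lemma wpair (c : ℕ → ℂ) (h : ∀ n, 4 ≤ ‖c n * c (n+1)‖) (n : ℕ) :
    ‖c 1‖ * 4^n ≤ ‖wP c n‖ * ‖wP c (n+1)‖ := by
  induction n with
  | zero =>
      have : wP c 1 = c 1 := by simp [wP]
      simp [wP, this]
  | succ n ih =>
      have h4 := h (n+1)
      rw [norm_mul] at h4
      have e1 : ‖wP c (n+1)‖ = ‖wP c n‖ * ‖c (n+1)‖ := by
        rw [wP_succ, norm_mul]
      have e2 : ‖wP c (n+2)‖ = ‖wP c (n+1)‖ * ‖c (n+2)‖ := by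
        rw [wP_succ, norm_mul]
      have p1 := wPabs_pos c h n
      have p2 := wPabs_pos c h (n+1)
      have p3 := wc_abs_pos c h (n+1)
      have p4 := wc_abs_pos c h (n+2)
      have hc1 := wc_abs_pos c h 1
      have h4n : (0:ℝ) < 4^n := by positivity
      calc ‖c 1‖ * 4^(n+1) = (‖c 1‖ * 4^n) * 4 := by ring
        _ ≤ (‖wP c n‖ * ‖wP c (n+1)‖)
            * (‖c (n+1)‖ * ‖c (n+2)‖) := by
            apply mul_le_mul ih h4 (by norm_num) (by positivity)
        _ = ‖wP c (n+1)‖ * ‖wP c (n+2)‖ := by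
            rw [e2, e1]; ring

lemma wdet (c : ℕ → ℂ) (n : ℕ) :
    cnum c (n+1) * cden c n - cnum c n * cden c (n+1) = (-1)^(n+1) := by
  induction n with
  | zero => simp [cnum, cden]
  | succ n ih =>
      have hp : cnum c (n+2) = c (n+1) * cnum c (n+1) + cnum c n := rfl
      have hq : cden c (n+2) = c (n+1) * cden c (n+1) + cden c n := rfl
      rw [hp, hq, pow_succ]
      linear_combination (-1 : ℂ) * ih

lemma wq_ne (c : ℕ → ℂ) (h : ∀ n, 4 ≤ ‖c n * c (n+1)‖) (n : ℕ) :
    cden c (n+1) ≠ 0 := by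
  have h1 := wB_lower c h n
  have h2 : (0:ℝ) < ((n:ℝ)+1) * (1/2)^n := by positivity
  have : 0 < ‖wB c n‖ := lt_of_lt_of_le h2 h1
  rw [wq_eq c h n]
  exact mul_ne_zero (norm_ne_zero_iff.1 this.ne') (wP_ne c h n)

/-- Worpitzky-type convergence: if `|c n * c (n+1)| ≥ 4` for all `n`, then the
continued fraction `[c 0, c 1, …]` converges, i.e. the sequence of convergents
`p n / q n` has a limit in `ℂ`. -/
theorem stmt3 (c : ℕ → ℂ) (h : ∀ n, 4 ≤ ‖c n * c (n+1)‖) :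
    ∃ L : ℂ, Tendsto (fun n => cnum c (n+1) / cden c (n+1)) atTop (nhds L) := by
  set x : ℕ → ℂ := fun n => cnum c (n+1) / cden c (n+1) with hx
  set u : ℕ → ℝ := fun n => 2 / ‖c 1‖ * (1 / (((n:ℝ)+1) * ((n:ℝ)+2))) with hu
  have hc1 := wc_abs_pos c h 1
  have key : ∀ n, dist (x n) (x (n+1)) ≤ u n := by
    intro n
    have q1 := wq_ne c h n
    have q2 := wq_ne c h (n+1)
    have hdiff : x n - x (n+1) = (-1)^(n+1) / (cden c (n+1) * cden c (n+2)) := by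
      have hd := wdet c (n+1)
      have e1 : x n * cden c (n+1) = cnum c (n+1) := by simp only [hx]; exact div_mul_cancel₀ _ q1
      have e2 : x (n+1) * cden c (n+2) = cnum c (n+2) := by simp only [hx]; exact div_mul_cancel₀ _ q2
      rw [eq_div_iff (mul_ne_zero q1 q2)]
      linear_combination cden c (n+2) * e1 - cden c (n+1) * e2 + (-1:ℂ) * hd
    have habs : dist (x n) (x (n+1))
        = 1 / (‖cden c (n+1)‖ * ‖cden c (n+2)‖) := by
      rw [Complex.dist_eq, hdiff, norm_div, norm_mul, norm_pow]
      simp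
    rw [habs]
    -- lower bound on the denominator product
    have b1 := wB_lower c h n
    have b2 := wB_lower c h (n+1)
    push_cast at b2
    have hpair := wpair c h n
    have e1 : ‖cden c (n+1)‖ = ‖wB c n‖ * ‖wP c n‖ := by
      rw [wq_eq c h n, norm_mul]
    have e2 : ‖cden c (n+2)‖ = ‖wB c (n+1)‖ * ‖wP c (n+1)‖ := by
      rw [wq_eq c h (n+1), norm_mul]
    have hpow : ((1:ℝ)/2)^n * ((1/2)^(n+1) * 4^n) = 1/2 := by
      have : ((1:ℝ)/2)^n * ((1/2)^n * 4^n) = 1 := by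
        rw [← mul_pow, ← mul_pow]; norm_num
      calc ((1:ℝ)/2)^n * ((1/2)^(n+1) * 4^n)
          = (1/2) * (((1:ℝ)/2)^n * ((1/2)^n * 4^n)) := by ring
        _ = 1/2 := by rw [this]; norm_num
    have hlow : ((n:ℝ)+1) * ((n:ℝ)+2) * ‖c 1‖ / 2
        ≤ ‖cden c (n+1)‖ * ‖cden c (n+2)‖ := by
      rw [e1, e2]
      have p1 := wPabs_pos c h n
      have p2 := wPabs_pos c h (n+1)
      have hB1 : (0:ℝ) ≤ ((n:ℝ)+1) * (1/2)^n := by positivity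
      have hB2 : (0:ℝ) ≤ ((n:ℝ)+1+1) * (1/2)^(n+1) := by positivity
      have step1 : (((n:ℝ)+1) * (1/2)^n) * (((n:ℝ)+1+1) * (1/2)^(n+1))
            * (‖c 1‖ * 4^n)
          ≤ (‖wB c n‖ * ‖wB c (n+1)‖)
            * (‖wP c n‖ * ‖wP c (n+1)‖) := by
        apply mul_le_mul _ hpair (by positivity) (by positivity)
        exact mul_le_mul b1 b2 hB2 (norm_nonneg _)
      calc ((n:ℝ)+1) * ((n:ℝ)+2) * ‖c 1‖ / 2
          = (((n:ℝ)+1) * (1/2)^n) * (((n:ℝ)+1+1) * (1/2)^(n+1))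
            * (‖c 1‖ * 4^n) := by
            rw [show (((n:ℝ)+1) * (1/2)^n) * (((n:ℝ)+1+1) * (1/2)^(n+1))
              * (‖c 1‖ * 4^n)
              = (((n:ℝ)+1) * ((n:ℝ)+2) * ‖c 1‖)
                * (((1:ℝ)/2)^n * ((1/2)^(n+1) * 4^n)) by ring, hpow]
            ring
        _ ≤ _ := by
            calc (((n:ℝ)+1) * (1/2)^n) * (((n:ℝ)+1+1) * (1/2)^(n+1))
                * (‖c 1‖ * 4^n)
                ≤ (‖wB c n‖ * ‖wB c (n+1)‖)
                  * (‖wP c n‖ * ‖wP c (n+1)‖) := step1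
              _ = ‖wB c n‖ * ‖wP c n‖
                  * (‖wB c (n+1)‖ * ‖wP c (n+1)‖) := by ring
    have hposd : (0:ℝ) < ((n:ℝ)+1) * ((n:ℝ)+2) * ‖c 1‖ / 2 := by positivity
    have := one_div_le_one_div_of_le hposd hlow
    calc 1 / (‖cden c (n+1)‖ * ‖cden c (n+2)‖)
        ≤ 1 / (((n:ℝ)+1) * ((n:ℝ)+2) * ‖c 1‖ / 2) := this
      _ = u n := by rw [hu]; field_simp
  have hsum : Summable u := by
    apply Summable.mul_left
    have hs2 : Summable (fun n : ℕ => 1 / ((n:ℝ)+1)^2) := by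
      have := Real.summable_one_div_nat_pow.2 (by norm_num : 2 ≤ 2)
      have := (summable_nat_add_iff 1).2 this
      simpa using this
    apply Summable.of_nonneg_of_le (fun n => by positivity) _ hs2
    intro n
    apply one_div_le_one_div_of_le (by positivity)
    nlinarith [Nat.cast_nonneg (α := ℝ) n]
  have hcauchy : CauchySeq x := cauchySeq_of_dist_le_of_summable u key hsum
  exact cauchySeq_tendsto_of_complete hcauchy
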